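/- Every toppling-equivalence class of configurations on K_n contains exactly n configurations f satisfying 0 <= f_i < n for all i < n. -/

import Mathlib

/-- Laplacian configuration of the complete graph `K n`: value `n-1` at `i`, `-1` elsewhere. -/
def lapK (n : ℕ) (i : Fin n) : Fin n → ℤ := fun j => if j = i then (n : ℤ) - 1 else -1

/-- Toppling equivalence on `K n`. -/
def topK (n : ℕ) (f g : Fin n → ℤ) : Prop :=
  ∃ a : Fin n → ℤ, f - g = ∑ i, a i • lapK n i
lemma sum_lapK (n : ℕ) (a : Fin n → ℤ) (j : Fin n) :
    ∑ i, a i * lapK n i j = n * a j - ∑ i, a i := by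
  have h : ∀ i : Fin n, a i * lapK n i j = (if i = j then (n:ℤ) * a i else 0) - a i := by
    intro i
    simp only [lapK]
    rcases eq_or_ne j i with h | h
    · simp [h, eq_comm]; ring
    · simp [h, h.symm]
  simp_rw [h, Finset.sum_sub_distrib, Finset.sum_ite_eq', Finset.mem_univ, if_true]

lemma topK_iff (n : ℕ) (hn : 0 < n) (f g : Fin n → ℤ) (i0 : Fin n) :
    topK n f g ↔ (∑ i, (f i - g i)) = 0 ∧
      ∀ i : Fin n, (n:ℤ) ∣ ((f i - g i) - (f i0 - g i0)) := by
  constructor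
  · rintro ⟨a, ha⟩
    have hv : ∀ j, f j - g j = n * a j - ∑ i, a i := by
      intro j
      have := congrFun ha j
      simpa [Finset.sum_apply, sum_lapK] using this
    constructor
    · simp_rw [hv]
      rw [Finset.sum_sub_distrib]
      simp [Finset.mul_sum]
    · intro i
      rw [hv i, hv i0]
      exact ⟨a i - a i0, by ring⟩
  · rintro ⟨hsum, hdvd⟩
    refine ⟨fun i => ((f i - g i) - (f i0 - g i0)) / n, ?_⟩
    funext j
    have hna : ∀ i, (n:ℤ) * (((f i - g i) - (f i0 - g i0)) / n) = (f i - g i) - (f i0 - g i0) :=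
      fun i => Int.mul_ediv_cancel' (hdvd i)
    have hsa : (n:ℤ) * ∑ i, ((f i - g i) - (f i0 - g i0)) / n = -(n * (f i0 - g i0)) := by
      rw [Finset.mul_sum]
      simp_rw [hna]
      rw [Finset.sum_sub_distrib, hsum]
      simp [Finset.card_univ]
      ring
    have hsa' : (∑ i, ((f i - g i) - (f i0 - g i0)) / n) = -(f i0 - g i0) := by
      have hn0 : (n:ℤ) ≠ 0 := by exact_mod_cast hn.ne'
      have := mul_left_cancel₀ hn0 (by rw [hsa]; ring : (n:ℤ) * (∑ i, ((f i - g i) - (f i0 - g i0)) / n) = n * (-(f i0 - g i0)))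
      exact this
    simp only [Pi.sub_apply, Finset.sum_apply, Pi.smul_apply, smul_eq_mul]
    rw [sum_lapK, hna j, hsa']
    ring

theorem stmt2 (n : ℕ) (hn : 2 ≤ n) (f : Fin n → ℤ) :
    Set.ncard {g : Fin n → ℤ |
      topK n f g ∧ ∀ i : Fin n, (i : ℕ) < n - 1 → 0 ≤ g i ∧ g i < n} = n := by
  have hnpos : (0:ℤ) < n := by exact_mod_cast Nat.lt_of_lt_of_le Nat.zero_lt_two hn
  set L : Fin n := ⟨n-1, by omega⟩ with hL
  have hne : ∀ i : Fin n, ((i:ℕ) < n - 1 ↔ i ≠ L) := by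
    intro i
    have hlt := i.isLt
    constructor
    · intro h heq
      rw [heq] at h
      simp only [hL] at h
      omega
    · intro h
      have : (i:ℕ) ≠ n-1 := fun hh => h (Fin.ext hh)
      omega
  set φ : Fin n → (Fin n → ℤ) := fun c i =>
    if i = L then (∑ j, f j) - ∑ j ∈ Finset.univ.erase L, (f j - (c:ℤ)) % n
    else (f i - (c:ℤ)) % n with hφ
  have hφne : ∀ (c : Fin n) (i : Fin n), i ≠ L → φ c i = (f i - (c:ℤ)) % n := by
    intro c i hi
    simp [hφ, hi]
  have hφL : ∀ c : Fin n,
      φ c L = (∑ j, f j) - ∑ j ∈ Finset.univ.erase L, (f j - (c:ℤ)) % n := by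
    intro c; simp [hφ]
  have hsumφ : ∀ c, ∑ j, φ c j = ∑ j, f j := by
    intro c
    rw [← Finset.sum_erase_add _ _ (Finset.mem_univ L)]
    rw [Finset.sum_congr rfl (fun j hj => hφne c j (Finset.ne_of_mem_erase hj)), hφL]
    ring
  have hmod : ∀ (c : Fin n) (i : Fin n), i ≠ L → (n:ℤ) ∣ (f i - φ c i - (c:ℤ)) := by
    intro c i hi
    rw [hφne c i hi]
    have h := Int.mul_ediv_add_emod (f i - (c:ℤ)) n
    exact ⟨(f i - (c:ℤ)) / n, by linarith⟩
  have hmodL : ∀ c : Fin n, (n:ℤ) ∣ (f L - φ c L - (c:ℤ)) := by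
    intro c
    have hT : (n:ℤ) ∣ ∑ j ∈ Finset.univ.erase L, (f j - (f j - (c:ℤ)) % n - (c:ℤ)) :=
      Finset.dvd_sum (fun j hj => by
        have h := Int.mul_ediv_add_emod (f j - (c:ℤ)) n
        exact ⟨(f j - (c:ℤ)) / n, by linarith⟩)
    have hcard : (Finset.univ.erase L).card = n - 1 := by
      rw [Finset.card_erase_of_mem (Finset.mem_univ L), Finset.card_univ, Fintype.card_fin]
    have hsplit : ∑ j, f j = ∑ j ∈ Finset.univ.erase L, f j + f L :=
      (Finset.sum_erase_add _ _ (Finset.mem_univ L)).symm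
    have hexp : f L - φ c L - (c:ℤ) =
        -(∑ j ∈ Finset.univ.erase L, (f j - (f j - (c:ℤ)) % n - (c:ℤ))) - n * (c:ℤ) := by
      rw [hφL, hsplit, Finset.sum_sub_distrib, Finset.sum_sub_distrib, Finset.sum_const, hcard]
      rw [nsmul_eq_mul, Nat.cast_sub (by omega : 1 ≤ n)]
      push_cast
      ring
    rw [hexp]
    exact dvd_sub (dvd_neg.mpr hT) ⟨(c:ℤ), rfl⟩
  have htop : ∀ c, topK n f (φ c) := by
    intro c
    rw [topK_iff n (by omega) f (φ c) L]
    refine ⟨?_, ?_⟩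
    · rw [Finset.sum_sub_distrib, hsumφ]; ring
    · intro i
      rcases eq_or_ne i L with rfl | hi
      · simp
      · have h3 := dvd_sub (hmod c i hi) (hmodL c)
        have he : (f i - φ c i - (c:ℤ)) - (f L - φ c L - (c:ℤ))
            = (f i - φ c i) - (f L - φ c L) := by ring
        rwa [he] at h3
  have hset : {g : Fin n → ℤ |
      topK n f g ∧ ∀ i : Fin n, (i : ℕ) < n - 1 → 0 ≤ g i ∧ g i < n} = Set.range φ := by
    ext g
    simp only [Set.mem_setOf_eq, Set.mem_range]
    constructor
    · rintro ⟨ht, hb⟩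
      rw [topK_iff n (by omega) f g L] at ht
      obtain ⟨hs, hd⟩ := ht
      set r : ℤ := (f L - g L) % n with hr
      have hr0 : 0 ≤ r := Int.emod_nonneg _ hnpos.ne'
      have hrn : r < n := Int.emod_lt_of_pos _ hnpos
      refine ⟨⟨r.toNat, by omega⟩, ?_⟩
      have hcr : ((⟨r.toNat, by omega⟩ : Fin n) : ℤ) = r := by
        simp [Int.toNat_of_nonneg hr0]
      set c : Fin n := ⟨r.toNat, by omega⟩ with hc
      have hrL : (n:ℤ) ∣ (f L - g L) - (c:ℤ) := by
        rw [hcr, hr]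
        have h := Int.mul_ediv_add_emod (f L - g L) n
        exact ⟨(f L - g L) / n, by linarith⟩
      have herase : ∀ i : Fin n, i ≠ L → φ c i = g i := by
        intro i hi
        rw [hφne c i hi]
        have hbi := hb i ((hne i).mpr hi)
        have hgi : g i % n = g i := Int.emod_eq_of_lt hbi.1 hbi.2
        have hdvd : (n:ℤ) ∣ (f i - (c:ℤ)) - g i := by
          have h1 := hd i
          have h2 := dvd_add h1 hrL
          have he : (f i - g i - (f L - g L)) + ((f L - g L) - (c:ℤ))
              = (f i - (c:ℤ)) - g i := by ring
          rwa [he] at h2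
        calc (f i - (c:ℤ)) % n = g i % n :=
              Int.emod_eq_emod_iff_emod_sub_eq_zero.mpr (Int.emod_eq_zero_of_dvd hdvd)
          _ = g i := hgi
      funext i
      rcases eq_or_ne i L with hiL | hi
      · subst hiL
        have hsg : ∑ j, f j = ∑ j, g j := by
          rw [Finset.sum_sub_distrib] at hs
          linarith [hs]
        have h1 : ∑ j ∈ Finset.univ.erase L, (f j - (c:ℤ)) % n
            = ∑ j ∈ Finset.univ.erase L, g j :=
          Finset.sum_congr rfl (fun j hj => by
            rw [← hφne c j (Finset.ne_of_mem_erase hj), herase j (Finset.ne_of_mem_erase hj)])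
        rw [hφL, h1, hsg, ← Finset.sum_erase_add Finset.univ g (Finset.mem_univ L)]
        ring
      · exact herase i hi
    · rintro ⟨c, rfl⟩
      refine ⟨htop c, fun i hi => ?_⟩
      rw [hφne c i ((hne i).mp hi)]
      exact ⟨Int.emod_nonneg _ hnpos.ne', Int.emod_lt_of_pos _ hnpos⟩
  have hinj : Function.Injective φ := by
    intro c c' h
    have hi0 : (⟨0, by omega⟩ : Fin n) ≠ L := by
      simp only [hL, ne_eq, Fin.mk.injEq]
      omega
    have h0 := congrFun h ⟨0, by omega⟩
    rw [hφne c _ hi0, hφne c' _ hi0] at h0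
    have hd : (n:ℤ) ∣ ((f ⟨0, by omega⟩ - (c:ℤ)) - (f ⟨0, by omega⟩ - (c':ℤ))) :=
      Int.dvd_of_emod_eq_zero (Int.emod_eq_emod_iff_emod_sub_eq_zero.mp h0)
    have hd' : (n:ℤ) ∣ ((c':ℤ) - (c:ℤ)) := by
      have he : (f ⟨0, by omega⟩ - (c:ℤ)) - (f ⟨0, by omega⟩ - (c':ℤ)) = (c':ℤ) - c := by ring
      rwa [he] at hd
    have hb : |((c':ℤ) - (c:ℤ))| < n := by
      have h1 : ((c:ℕ):ℤ) < n := by exact_mod_cast c.isLt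
      have h2 : ((c':ℕ):ℤ) < n := by exact_mod_cast c'.isLt
      have h3 : (0:ℤ) ≤ ((c:ℕ):ℤ) := Int.natCast_nonneg _
      have h4 : (0:ℤ) ≤ ((c':ℕ):ℤ) := Int.natCast_nonneg _
      rw [abs_lt]
      constructor <;> linarith
    have hz := Int.eq_zero_of_abs_lt_dvd hd' hb
    have hcc : ((c':ℕ):ℤ) = ((c:ℕ):ℤ) := by linarith
    exact (Fin.ext (by exact_mod_cast hcc)).symm
  rw [hset, ← Set.image_univ, Set.ncard_image_of_injective _ hinj, Set.ncard_univ,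
    Nat.card_eq_fintype_card, Fintype.card_fin]
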